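/- For every natural number l, every natural number ν ≥ 2, and every real x with x² ≠ 1, the complementary Legendre polynomials satisfy the three-term recursion 𝒫_ν(x,l) − 2(ν−1−l)x·𝒫_{ν−1}(x,l) = (ν−1)(ν−2l−2)(1−x²)·𝒫_{ν−2}(x,l), where ν−1−l and ν−2l−2 are taken as integers. -/

import Mathlib

/-- Complementary Legendre polynomial
`𝒫_ν(x,l) = (1-x²)^(ν-l) · (dᵛ/dtᵛ)(1-t²)^l |_{t=x}` (zpow power). -/
noncomputable def complLegendre (l ν : ℕ) (x : ℝ) : ℝ :=
  (1 - x ^ 2) ^ ((ν : ℤ) - (l : ℤ)) *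
    iteratedDeriv ν (fun t : ℝ => (1 - t ^ 2) ^ l) x

open Polynomial in
lemma complLegendre_dq : derivative (1 - X ^ 2 : ℝ[X]) = -(2 * X) := by
  simp [derivative_X_pow, map_ofNat, one_add_one_eq_two]

open Polynomial in
lemma complLegendre_dx2 : derivative (X ^ 2 : ℝ[X]) = 2 * X := by
  simp [derivative_X_pow, map_ofNat, one_add_one_eq_two]

open Polynomial in
lemma complLegendre_firstOrder (l : ℕ) :
    (1 - X ^ 2) * derivative ((1 - X ^ 2 : ℝ[X]) ^ l)
      = -2 * (l : ℝ[X]) * X * (1 - X ^ 2) ^ l := by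
  cases l with
  | zero => simp
  | succ n =>
    rw [derivative_pow]
    simp only [derivative_sub, derivative_one, derivative_X_pow, Nat.add_sub_cancel,
      C_eq_natCast, zero_sub, pow_one]
    push_cast
    ring

open Polynomial in
lemma complLegendre_keyPoly (l m : ℕ) :
    (1 - X ^ 2) * derivative^[m + 2] ((1 - X ^ 2 : ℝ[X]) ^ l)
      = 2 * ((m : ℝ[X]) + 1 - (l : ℝ[X])) * X * derivative^[m + 1] ((1 - X ^ 2 : ℝ[X]) ^ l)
        + ((m : ℝ[X]) + 1) * ((m : ℝ[X]) - 2 * (l : ℝ[X]))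
            * derivative^[m] ((1 - X ^ 2 : ℝ[X]) ^ l) := by
  induction m with
  | zero =>
    have h := congrArg derivative (complLegendre_firstOrder l)
    simp only [derivative_mul, complLegendre_dq, complLegendre_dx2, derivative_X,
      derivative_natCast, derivative_neg, derivative_ofNat, zero_mul, mul_zero, neg_zero,
      zero_add, add_zero, mul_one] at h
    show (1 - X ^ 2) * derivative (derivative ((1 - X ^ 2 : ℝ[X]) ^ l)) = _
    simp only [Nat.cast_zero, Nat.zero_add, zero_add, Function.iterate_one,
      Function.iterate_zero_apply]
    linear_combination h
  | succ m ih =>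
    have h := congrArg derivative ih
    simp only [derivative_mul, complLegendre_dq, complLegendre_dx2, derivative_X,
      derivative_natCast, derivative_neg, derivative_add, derivative_sub, derivative_one,
      derivative_ofNat, ← Function.iterate_succ_apply', Nat.succ_eq_add_one,
      zero_mul, mul_zero, neg_zero, zero_add, add_zero, zero_sub, sub_zero, mul_one] at h
    have e1 : m + 1 + 2 = m + 2 + 1 := rfl
    rw [e1]
    push_cast
    linear_combination h

open Polynomial in
lemma complLegendre_iteratedDeriv_polyEval (p : ℝ[X]) (n : ℕ) :
    iteratedDeriv n (fun t : ℝ => p.eval t) = fun x => (derivative^[n] p).eval x := by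
  induction n with
  | zero => simp
  | succ n ih =>
    rw [iteratedDeriv_succ, ih, Function.iterate_succ_apply']
    funext x
    exact Polynomial.deriv _

open Polynomial in
theorem complLegendre_three_term (l ν : ℕ) (hν : 2 ≤ ν) (x : ℝ) (hx : x ^ 2 ≠ 1) :
    complLegendre l ν x
        - 2 * (((ν : ℤ) - 1 - (l : ℤ) : ℤ) : ℝ) * x * complLegendre l (ν - 1) x
      = ((ν : ℝ) - 1) * (((ν : ℤ) - 2 * (l : ℤ) - 2 : ℤ) : ℝ) * (1 - x ^ 2)
          * complLegendre l (ν - 2) x := by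
  obtain ⟨m, rfl⟩ : ∃ m, ν = m + 2 := ⟨ν - 2, (Nat.sub_add_cancel hν).symm⟩
  have hfun : (fun t : ℝ => (1 - t ^ 2) ^ l)
      = fun t : ℝ => ((1 - X ^ 2 : ℝ[X]) ^ l).eval t := by
    funext t; simp
  have hh : (1 - x ^ 2 : ℝ) ≠ 0 := sub_ne_zero.mpr (Ne.symm hx)
  have hkey := congrArg (fun p : ℝ[X] => p.eval x) (complLegendre_keyPoly l m)
  simp only [eval_mul, eval_add, eval_sub, eval_one, eval_pow, eval_X, eval_natCast,
    eval_ofNat] at hkey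
  simp only [complLegendre, hfun, complLegendre_iteratedDeriv_polyEval,
    show m + 2 - 1 = m + 1 from rfl, show m + 2 - 2 = m from rfl]
  have e2 : ((m + 2 : ℕ) : ℤ) - (l : ℤ) = ((m : ℤ) - (l : ℤ)) + 1 + 1 := by push_cast; ring
  have e1 : ((m + 1 : ℕ) : ℤ) - (l : ℤ) = ((m : ℤ) - (l : ℤ)) + 1 := by push_cast; ring
  rw [e2, e1, zpow_add_one₀ hh, zpow_add_one₀ hh]
  generalize (1 - x ^ 2 : ℝ) ^ ((m : ℤ) - (l : ℤ)) = y
  push_cast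
  linear_combination (y * (1 - x ^ 2)) * hkey
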